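/- Let μ be any probability measure on ℝⁿ with finite fourth moment ∫ ‖x‖⁴ dμ < ∞, let R > 0 be such that μ(B(0,R)) > 0, and let μ_R denote μ conditioned on the closed ball B(0,R) of radius R centered at 0. Then W₂²(μ, μ_R) ≤ 4 ( ∫_{ℝⁿ} ‖x‖⁴ dμ )^{1/2} · μ({x : ‖x‖ > R})^{1/2}. -/

import Mathlib

open MeasureTheory ProbabilityTheory

/-- Squared 2-Wasserstein distance between two measures on `ℝⁿ`:
the infimum of `∫ ‖x - y‖²` over all couplings. -/
noncomputable def W2sq {n : ℕ}
    (μ ν : Measure (EuclideanSpace ℝ (Fin n))) : ℝ :=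
  sInf { c : ℝ | ∃ γ : Measure (EuclideanSpace ℝ (Fin n) × EuclideanSpace ℝ (Fin n)),
    γ.map Prod.fst = μ ∧ γ.map Prod.snd = ν ∧ c = ∫ p, ‖p.1 - p.2‖ ^ 2 ∂γ }

/-- A measure on `ℝⁿ` is log-concave if it has density `e^{-V} 1_S` with respect to the
Lebesgue measure, where `S` is a convex set and `V` is convex on `S`. -/
def IsLogConcaveMeasure {n : ℕ} (μ : Measure (EuclideanSpace ℝ (Fin n))) : Prop :=
  ∃ (S : Set (EuclideanSpace ℝ (Fin n))) (V : EuclideanSpace ℝ (Fin n) → ℝ),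
    Convex ℝ S ∧ ConvexOn ℝ S V ∧
    μ = volume.withDensity (S.indicator fun x => ENNReal.ofReal (Real.exp (-V x)))

/-- The measure `μ` conditioned on the closed ball of radius `R` centered at the origin. -/
noncomputable def condBall {n : ℕ} (μ : Measure (EuclideanSpace ℝ (Fin n))) (R : ℝ) :
    Measure (EuclideanSpace ℝ (Fin n)) :=
  (μ (Metric.closedBall 0 R))⁻¹ • μ.restrict (Metric.closedBall 0 R)

/-- **Truncation estimate in Wasserstein distance.**
For any probability measure `μ` on `ℝⁿ` with finite fourth moment and any `R > 0` with
`μ(B(0,R)) > 0`, the conditioned measure `μ_R` satisfies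
`W₂²(μ, μ_R) ≤ 4 (∫ ‖x‖⁴ dμ)^{1/2} μ({‖x‖ > R})^{1/2}`. -/
theorem w2sq_condBall_le_of_fourth_moment
    (n : ℕ) (hn : 1 ≤ n)
    (μ : Measure (EuclideanSpace ℝ (Fin n))) [IsProbabilityMeasure μ]
    (hmom : Integrable (fun x => ‖x‖ ^ 4) μ)
    (R : ℝ) (hR : 0 < R) (hball : 0 < μ (Metric.closedBall 0 R)) :
    W2sq μ (condBall μ R) ≤
      4 * Real.sqrt (∫ x, ‖x‖ ^ 4 ∂μ) *
        Real.sqrt ((μ {x | R < ‖x‖}).toReal) := by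
  classical
  set E := EuclideanSpace ℝ (Fin n)
  set B : Set (EuclideanSpace ℝ (Fin n)) := Metric.closedBall 0 R with hBdef
  have hBmeas : MeasurableSet B := measurableSet_closedBall
  have hμB_ne : μ B ≠ 0 := hball.ne'
  have hμB_top : μ B ≠ ⊤ := measure_ne_top μ B
  have hset : {x : EuclideanSpace ℝ (Fin n) | R < ‖x‖} = Bᶜ := by
    ext x
    simp [hBdef, Metric.mem_closedBall, dist_zero_right, not_le]
  set ν := condBall μ R with hνdef
  have hνprob : IsProbabilityMeasure ν := by
    constructor
    rw [hνdef, condBall]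
    simp only [Measure.smul_apply, Measure.restrict_apply_univ, smul_eq_mul]
    exact ENNReal.inv_mul_cancel hμB_ne hμB_top
  haveI := hνprob
  have hrestrict : (μ B) • ν = μ.restrict B := by
    rw [hνdef, condBall, smul_smul, ENNReal.mul_inv_cancel hμB_ne hμB_top, one_smul]
  have hνcompl : ν Bᶜ = 0 := by
    rw [hνdef, condBall]
    simp [Measure.restrict_apply hBmeas.compl]
    rw [← hBdef, Set.compl_inter_self, measure_empty]
  have hνmem : ∀ᵐ y ∂ν, y ∈ B := by
    rw [ae_iff]
    exact hνcompl
  -- the coupling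
  set γ1 : Measure (EuclideanSpace ℝ (Fin n) × EuclideanSpace ℝ (Fin n)) :=
    (μ.restrict B).map (fun x => (x, x)) with hγ1def
  set γ2 : Measure (EuclideanSpace ℝ (Fin n) × EuclideanSpace ℝ (Fin n)) :=
    (μ.restrict Bᶜ).prod ν with hγ2def
  have hdiag : Measurable (fun x : EuclideanSpace ℝ (Fin n) => (x, x)) :=
    measurable_id.prodMk measurable_id
  have h1fst : γ1.map Prod.fst = μ.restrict B := by
    rw [hγ1def, Measure.map_map measurable_fst hdiag]
    have : (Prod.fst ∘ fun x : EuclideanSpace ℝ (Fin n) => (x, x)) = id := rfl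
    rw [this, Measure.map_id]
  have h1snd : γ1.map Prod.snd = μ.restrict B := by
    rw [hγ1def, Measure.map_map measurable_snd hdiag]
    have : (Prod.snd ∘ fun x : EuclideanSpace ℝ (Fin n) => (x, x)) = id := rfl
    rw [this, Measure.map_id]
  have h2fst : γ2.map Prod.fst = μ.restrict Bᶜ := by
    rw [hγ2def, Measure.map_fst_prod, measure_univ, one_smul]
  have h2snd : γ2.map Prod.snd = (μ Bᶜ) • ν := by
    rw [hγ2def, Measure.map_snd_prod, Measure.restrict_apply_univ]
  have hfst : (γ1 + γ2).map Prod.fst = μ := by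
    rw [Measure.map_add _ _ measurable_fst, h1fst, h2fst,
      Measure.restrict_add_restrict_compl hBmeas]
  have hsnd : (γ1 + γ2).map Prod.snd = ν := by
    rw [Measure.map_add _ _ measurable_snd, h1snd, h2snd, ← hrestrict, ← add_smul,
      measure_add_measure_compl hBmeas, measure_univ, one_smul]
  -- measurability of the cost
  have hfcont : Continuous (fun p : EuclideanSpace ℝ (Fin n) × EuclideanSpace ℝ (Fin n) =>
      ‖p.1 - p.2‖ ^ 2) := ((continuous_fst.sub continuous_snd).norm.pow 2)
  -- integral over γ1 is zero
  have hint1 : Integrable (fun p : EuclideanSpace ℝ (Fin n) × EuclideanSpace ℝ (Fin n) =>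
      ‖p.1 - p.2‖ ^ 2) γ1 := by
    rw [hγ1def, integrable_map_measure hfcont.aestronglyMeasurable hdiag.aemeasurable]
    have : ((fun p : EuclideanSpace ℝ (Fin n) × EuclideanSpace ℝ (Fin n) => ‖p.1 - p.2‖ ^ 2) ∘
        fun x => (x, x)) = fun _ => (0 : ℝ) := by
      funext x; simp [Function.comp]
    rw [this]
    exact integrable_const 0
  have hI1 : (∫ p, ‖p.1 - p.2‖ ^ 2 ∂γ1) = 0 := by
    rw [hγ1def, integral_map hdiag.aemeasurable hfcont.aestronglyMeasurable]
    simp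
  -- integrability of ‖x‖² w.r.t. μ
  have hsq : Integrable (fun x : EuclideanSpace ℝ (Fin n) => ‖x‖ ^ 2) μ := by
    refine (hmom.add (integrable_const 1)).mono'
      ((continuous_norm.pow 2).aestronglyMeasurable) ?_
    filter_upwards with x
    rw [Real.norm_of_nonneg (by positivity), Pi.add_apply]
    nlinarith [norm_nonneg x, sq_nonneg (‖x‖ ^ 2 - 1)]
  -- the dominating function on γ2
  have hG : Integrable (fun p : EuclideanSpace ℝ (Fin n) × EuclideanSpace ℝ (Fin n) =>
      4 * ‖p.1‖ ^ 2) γ2 := by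
    have h : Integrable (fun x : EuclideanSpace ℝ (Fin n) => 4 * ‖x‖ ^ 2) (μ.restrict Bᶜ) :=
      (hsq.restrict).const_mul 4
    rw [← h2fst] at h
    exact (integrable_map_measure
      (continuous_const.mul (continuous_norm.pow 2)).aestronglyMeasurable
      measurable_fst.aemeasurable).mp h
  -- a.e. membership on γ2
  have hmem : ∀ᵐ p ∂γ2, p.1 ∈ Bᶜ ∧ p.2 ∈ B := by
    rw [ae_iff]
    refine measure_mono_null (fun p hp => ?_) (?_ : γ2 ((Bᶜᶜ ×ˢ Set.univ) ∪ (Set.univ ×ˢ Bᶜ)) = 0)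
    · simp only [Set.mem_setOf_eq, not_and_or] at hp
      rcases hp with h | h
      · exact Or.inl ⟨by simpa using h, Set.mem_univ _⟩
      · exact Or.inr ⟨Set.mem_univ _, h⟩
    · refine measure_union_null ?_ ?_
      · rw [hγ2def, Measure.prod_prod, compl_compl,
          Measure.restrict_apply hBmeas]
        simp
      · rw [hγ2def, Measure.prod_prod, hνcompl, mul_zero]
  have hbound : ∀ᵐ p ∂γ2, ‖p.1 - p.2‖ ^ 2 ≤ 4 * ‖p.1‖ ^ 2 := by
    filter_upwards [hmem] with p hp
    obtain ⟨h1, h2⟩ := hp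
    have hx : R < ‖p.1‖ := by
      have := h1
      simp only [hBdef, Set.mem_compl_iff, Metric.mem_closedBall, dist_zero_right, not_le] at this
      exact this
    have hy : ‖p.2‖ ≤ R := by
      simpa [hBdef, Metric.mem_closedBall, dist_zero_right] using h2
    have hle : ‖p.1 - p.2‖ ≤ 2 * ‖p.1‖ := by
      calc ‖p.1 - p.2‖ ≤ ‖p.1‖ + ‖p.2‖ := norm_sub_le _ _
        _ ≤ 2 * ‖p.1‖ := by linarith
    nlinarith [norm_nonneg (p.1 - p.2), norm_nonneg p.1]
  have hint2 : Integrable (fun p : EuclideanSpace ℝ (Fin n) × EuclideanSpace ℝ (Fin n) =>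
      ‖p.1 - p.2‖ ^ 2) γ2 := by
    refine hG.mono' hfcont.aestronglyMeasurable ?_
    filter_upwards [hbound] with p hp
    rwa [Real.norm_of_nonneg (by positivity)]
  have hI2 : (∫ p, ‖p.1 - p.2‖ ^ 2 ∂γ2) ≤ ∫ x in Bᶜ, 4 * ‖x‖ ^ 2 ∂μ := by
    have h1 : (∫ p, ‖p.1 - p.2‖ ^ 2 ∂γ2) ≤
        ∫ p : EuclideanSpace ℝ (Fin n) × EuclideanSpace ℝ (Fin n), 4 * ‖p.1‖ ^ 2 ∂γ2 :=
      integral_mono_ae hint2 hG hbound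
    have h2 : (∫ p : EuclideanSpace ℝ (Fin n) × EuclideanSpace ℝ (Fin n), 4 * ‖p.1‖ ^ 2 ∂γ2)
        = ∫ x in Bᶜ, 4 * ‖x‖ ^ 2 ∂μ := by
      rw [← h2fst, integral_map (f := fun x : EuclideanSpace ℝ (Fin n) => 4 * ‖x‖ ^ 2) measurable_fst.aemeasurable
        (continuous_const.mul (continuous_norm.pow 2)).aestronglyMeasurable]
    rw [← h2]; exact h1
  -- Cauchy-Schwarz step
  have hCS : (∫ x in Bᶜ, ‖x‖ ^ 2 ∂μ) ≤
      Real.sqrt ((μ Bᶜ).toReal) * Real.sqrt (∫ x, ‖x‖ ^ 4 ∂μ) := by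
    set f : EuclideanSpace ℝ (Fin n) → ℝ := Bᶜ.indicator (fun _ => 1) with hf
    set g : EuclideanSpace ℝ (Fin n) → ℝ := fun x => ‖x‖ ^ 2 with hg
    have hfae : AEStronglyMeasurable f μ :=
      (aestronglyMeasurable_const.indicator hBmeas.compl)
    have hfmem : MemLp f (ENNReal.ofReal 2) μ := by
      refine MemLp.of_bound hfae 1 ?_
      filter_upwards with x
      rw [hf]
      by_cases hx : x ∈ Bᶜ <;> simp [hx]
    have hgmem : MemLp g (ENNReal.ofReal 2) μ := by
      have h2 : ENNReal.ofReal 2 = 2 := by norm_num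
      rw [h2]
      refine (memLp_two_iff_integrable_sq (f := g)
        ((continuous_norm.pow 2).aestronglyMeasurable)).2 ?_
      have hfun : (fun x : EuclideanSpace ℝ (Fin n) => g x ^ 2) = fun x => ‖x‖ ^ 4 := by
        funext x; rw [hg]; ring
      rw [hfun]
      exact hmom
    have hmain := integral_mul_le_Lp_mul_Lq_of_nonneg
      (Real.holderConjugate_iff.mpr ⟨by norm_num, by norm_num⟩ : Real.HolderConjugate 2 2)
      (Filter.Eventually.of_forall fun x => by
        rw [hf]; by_cases hx : x ∈ Bᶜ <;> simp [hx])
      (Filter.Eventually.of_forall fun x => by positivity)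
      hfmem hgmem
    have hleft : (∫ x, f x * g x ∂μ) = ∫ x in Bᶜ, ‖x‖ ^ 2 ∂μ := by
      rw [← integral_indicator hBmeas.compl]
      congr 1
      funext x
      rw [hf, hg]
      by_cases hx : x ∈ Bᶜ <;> simp [hx]
    have hf2 : (∫ x, f x ^ (2 : ℝ) ∂μ) = (μ Bᶜ).toReal := by
      have : (fun x => f x ^ (2 : ℝ)) = Bᶜ.indicator (fun _ => (1 : ℝ)) := by
        funext x
        rw [hf]
        by_cases hx : x ∈ Bᶜ <;> simp [hx]
      rw [this, integral_indicator_const (1 : ℝ) hBmeas.compl, smul_eq_mul, mul_one]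
      rfl
    have hg2 : (∫ x, g x ^ (2 : ℝ) ∂μ) = ∫ x, ‖x‖ ^ 4 ∂μ := by
      congr 1
      funext x
      rw [hg, show ((2 : ℝ)) = ((2 : ℕ) : ℝ) by norm_num, Real.rpow_natCast]
      ring
    rw [hleft, hf2, hg2] at hmain
    calc (∫ x in Bᶜ, ‖x‖ ^ 2 ∂μ)
        ≤ (μ Bᶜ).toReal ^ (1 / (2:ℝ)) * (∫ x, ‖x‖ ^ 4 ∂μ) ^ (1 / (2:ℝ)) := hmain
      _ = Real.sqrt ((μ Bᶜ).toReal) * Real.sqrt (∫ x, ‖x‖ ^ 4 ∂μ) := by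
          rw [Real.sqrt_eq_rpow, Real.sqrt_eq_rpow]
  -- putting it together
  have hbdd : BddBelow { c : ℝ | ∃ γ : Measure (EuclideanSpace ℝ (Fin n) ×
      EuclideanSpace ℝ (Fin n)),
      γ.map Prod.fst = μ ∧ γ.map Prod.snd = ν ∧ c = ∫ p, ‖p.1 - p.2‖ ^ 2 ∂γ } := by
    refine ⟨0, fun c hc => ?_⟩
    obtain ⟨γ', _, _, rfl⟩ := hc
    exact integral_nonneg fun p => by positivity
  have hmemW : (∫ p, ‖p.1 - p.2‖ ^ 2 ∂(γ1 + γ2)) ∈ { c : ℝ | ∃ γ : Measure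
      (EuclideanSpace ℝ (Fin n) × EuclideanSpace ℝ (Fin n)),
      γ.map Prod.fst = μ ∧ γ.map Prod.snd = ν ∧ c = ∫ p, ‖p.1 - p.2‖ ^ 2 ∂γ } :=
    ⟨γ1 + γ2, hfst, hsnd, rfl⟩
  have hW : W2sq μ ν ≤ ∫ p, ‖p.1 - p.2‖ ^ 2 ∂(γ1 + γ2) := csInf_le hbdd hmemW
  rw [hset]
  calc W2sq μ ν ≤ ∫ p, ‖p.1 - p.2‖ ^ 2 ∂(γ1 + γ2) := hW
    _ = (∫ p, ‖p.1 - p.2‖ ^ 2 ∂γ1) + ∫ p, ‖p.1 - p.2‖ ^ 2 ∂γ2 :=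
        integral_add_measure hint1 hint2
    _ ≤ ∫ x in Bᶜ, 4 * ‖x‖ ^ 2 ∂μ := by rw [hI1, zero_add]; exact hI2
    _ = 4 * ∫ x in Bᶜ, ‖x‖ ^ 2 ∂μ := by rw [integral_const_mul]
    _ ≤ 4 * (Real.sqrt ((μ Bᶜ).toReal) * Real.sqrt (∫ x, ‖x‖ ^ 4 ∂μ)) := by linarith
    _ = 4 * Real.sqrt (∫ x, ‖x‖ ^ 4 ∂μ) * Real.sqrt ((μ Bᶜ).toReal) := by ring
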